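/- Let Ω ⊆ ℝ^N be a convex set, f : ℝ^N → ℝ, L ∈ ℝ^{N×N} a symmetric positive semidefinite matrix with ⟨v, L v⟩ ≤ λ ‖v‖² for all v ∈ ℝ^N, and define S₁(x,y) = f(x) + ⟨y, L x⟩ + (1/2)⟨x, L x⟩. Suppose x* ∈ Ω and y* ∈ ℝ^N satisfy L x* = 0 and f(x*) ≤ f(x) + ⟨y*, L x⟩ for all x ∈ Ω. Let C ≥ 0 and let x : (0,∞) → Ω, y : (0,∞) → ℝ^N satisfy S₁(x(t), y*) − S₁(x*, y(t)) ≤ C/t² for all t > 0. Then for every t > 0: ‖L x(t)‖ ≤ √(2 λ C) / t and |f(x(t)) − f(x*)| ≤ ‖y*‖ √(2 λ C)/t + C/t²; in particular both the constraint violation ‖L x(t)‖ and the suboptimality |f(x(t)) − f(x*)| converge to 0 at rate O(1/t). -/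

import Mathlib

open scoped RealInnerProductSpace
open Set

lemma aux_adj {N : ℕ} (L : Matrix (Fin N) (Fin N) ℝ) (hsym : L.transpose = L)
    (u v : EuclideanSpace ℝ (Fin N)) :
    ⟪Matrix.toEuclideanLin L u, v⟫ = ⟪u, Matrix.toEuclideanLin L v⟫ := by
  have h : L.conjTranspose = L := by
    rw [Matrix.conjTranspose_eq_transpose_of_trivial]; exact hsym
  have := Matrix.toEuclideanLin_conjTranspose_eq_adjoint L
  rw [h] at this
  nth_rewrite 1 [this]
  rw [LinearMap.adjoint_inner_left]

lemma aux_key {N : ℕ} (L : Matrix (Fin N) (Fin N) ℝ) (hsym : L.transpose = L)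
    (hpsd : ∀ v : EuclideanSpace ℝ (Fin N), 0 ≤ ⟪v, Matrix.toEuclideanLin L v⟫)
    (lam : ℝ) (hlam : 0 ≤ lam)
    (hbound : ∀ v : EuclideanSpace ℝ (Fin N),
      ⟪v, Matrix.toEuclideanLin L v⟫ ≤ lam * ‖v‖ ^ 2)
    (v : EuclideanSpace ℝ (Fin N)) :
    ‖Matrix.toEuclideanLin L v‖ ^ 2 ≤ lam * ⟪v, Matrix.toEuclideanLin L v⟫ := by
  set A := Matrix.toEuclideanLin L with hA
  set w := A v with hw
  have hquad : ∀ a : ℝ, 0 ≤ ⟪w, A w⟫ * (a * a) + (2 * ‖w‖ ^ 2) * a + ⟪v, A v⟫ := by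
    intro a
    have h0 := hpsd (v + a • w)
    have hexp : A (v + a • w) = A v + a • A w := by
      simp [map_add, map_smul]
    rw [hexp] at h0
    have h1 : ⟪v, A w⟫ = ‖w‖ ^ 2 := by
      rw [← aux_adj L hsym v w, ← hw, real_inner_self_eq_norm_sq]
    have h2 : ⟪w, A v⟫ = ‖w‖ ^ 2 := by
      rw [← hw, real_inner_self_eq_norm_sq]
    have hexpand : ⟪v + a • w, A v + a • A w⟫
        = ⟪v, A v⟫ + a * ⟪v, A w⟫ + a * ⟪w, A v⟫ + a * a * ⟪w, A w⟫ := by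
      rw [inner_add_left, inner_add_right, inner_add_right, real_inner_smul_left,
        real_inner_smul_left, real_inner_smul_right, real_inner_smul_right]
      ring
    rw [hexpand, h1, h2] at h0
    nlinarith [h0]
  have hd := discrim_le_zero hquad
  rw [discrim] at hd
  have hb := hbound w
  by_cases hw0 : ‖w‖ = 0
  · have h0 : ‖Matrix.toEuclideanLin L v‖ ^ 2 = 0 := by
      rw [show Matrix.toEuclideanLin L v = w from rfl, hw0]; ring
    rw [h0]
    exact mul_nonneg hlam (hpsd v)
  · have hwpos : 0 < ‖w‖ ^ 2 := by positivity
    nlinarith [hpsd v, hpsd w]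

/-- Corollary 1(iii) of the paper. If the duality gap along a
trajectory decays like `C/t²`, then the constraint violation `‖L x(t)‖` and the
suboptimality `|f(x(t)) − f(x*)|` decay at rate `O(1/t)`:
`‖L x(t)‖ ≤ √(2λC)/t` and `|f(x(t)) − f(x*)| ≤ ‖y*‖√(2λC)/t + C/t²`. -/
theorem stmt_13 (N : ℕ) (Ω : Set (EuclideanSpace ℝ (Fin N)))
    (hΩ : Convex ℝ Ω)
    (f : EuclideanSpace ℝ (Fin N) → ℝ)
    (L : Matrix (Fin N) (Fin N) ℝ)
    (hsym : L.transpose = L)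
    (hpsd : ∀ v : EuclideanSpace ℝ (Fin N), 0 ≤ ⟪v, Matrix.toEuclideanLin L v⟫)
    (lam : ℝ) (hlam : 0 ≤ lam)
    (hbound : ∀ v : EuclideanSpace ℝ (Fin N),
      ⟪v, Matrix.toEuclideanLin L v⟫ ≤ lam * ‖v‖ ^ 2)
    (S₁ : EuclideanSpace ℝ (Fin N) → EuclideanSpace ℝ (Fin N) → ℝ)
    (hS₁ : ∀ x y, S₁ x y = f x + ⟪y, Matrix.toEuclideanLin L x⟫
      + (1 / 2) * ⟪x, Matrix.toEuclideanLin L x⟫)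
    (xstar ystar : EuclideanSpace ℝ (Fin N))
    (hx : xstar ∈ Ω)
    (hLx : Matrix.toEuclideanLin L xstar = 0)
    (hopt : ∀ x ∈ Ω, f xstar ≤ f x + ⟪ystar, Matrix.toEuclideanLin L x⟫)
    (C : ℝ) (hC : 0 ≤ C)
    (x : ℝ → EuclideanSpace ℝ (Fin N)) (y : ℝ → EuclideanSpace ℝ (Fin N))
    (hxΩ : ∀ t > 0, x t ∈ Ω)
    (hgap : ∀ t > 0, S₁ (x t) ystar - S₁ xstar (y t) ≤ C / t ^ 2) :
    ∀ t > 0,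
      ‖Matrix.toEuclideanLin L (x t)‖ ≤ Real.sqrt (2 * lam * C) / t ∧
      |f (x t) - f xstar| ≤ ‖ystar‖ * Real.sqrt (2 * lam * C) / t + C / t ^ 2 := by
  intro t ht
  set A := Matrix.toEuclideanLin L with hA
  set w := A (x t) with hw
  have hgap' := hgap t ht
  rw [hS₁, hS₁, hLx] at hgap'
  simp only [inner_zero_right, mul_zero, add_zero] at hgap'
  -- hgap' : f (x t) + ⟪ystar, w⟫ + 1/2 * ⟪x t, w⟫ - f xstar ≤ C / t^2
  have hopt' := hopt (x t) (hxΩ t ht)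
  have hq : 0 ≤ ⟪x t, A (x t)⟫ := hpsd (x t)
  have hq2 : ⟪x t, A (x t)⟫ ≤ 2 * (C / t ^ 2) := by linarith
  have hkey := aux_key L hsym hpsd lam hlam hbound (x t)
  have hw2 : ‖w‖ ^ 2 ≤ 2 * lam * C / t ^ 2 := by
    have : lam * ⟪x t, A (x t)⟫ ≤ lam * (2 * (C / t ^ 2)) :=
      mul_le_mul_of_nonneg_left hq2 hlam
    calc ‖w‖ ^ 2 ≤ lam * ⟪x t, A (x t)⟫ := hkey
      _ ≤ lam * (2 * (C / t ^ 2)) := this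
      _ = 2 * lam * C / t ^ 2 := by ring
  have hwle : ‖w‖ ≤ Real.sqrt (2 * lam * C) / t := by
    have h2 : Real.sqrt (2 * lam * C / t ^ 2) = Real.sqrt (2 * lam * C) / t := by
      rw [Real.sqrt_div (by positivity : (0:ℝ) ≤ 2 * lam * C), Real.sqrt_sq ht.le]
    rw [← h2]
    exact Real.le_sqrt_of_sq_le hw2
  refine ⟨hwle, ?_⟩
  have hiy : |⟪ystar, w⟫| ≤ ‖ystar‖ * ‖w‖ := abs_real_inner_le_norm ystar w
  have habs := abs_le.mp hiy
  have hmul : ‖ystar‖ * ‖w‖ ≤ ‖ystar‖ * (Real.sqrt (2 * lam * C) / t) :=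
    mul_le_mul_of_nonneg_left hwle (norm_nonneg _)
  have heq : ‖ystar‖ * Real.sqrt (2 * lam * C) / t
      = ‖ystar‖ * (Real.sqrt (2 * lam * C) / t) := by ring
  rw [abs_le]
  constructor
  · -- f xstar - f (x t) ≤ ⟪ystar, w⟫ ≤ ‖ystar‖‖w‖
    have h3 : f xstar - f (x t) ≤ ⟪ystar, w⟫ := by linarith
    have ht2 : 0 ≤ C / t ^ 2 := by positivity
    linarith [habs.2]
  · have h3 : f (x t) - f xstar ≤ C / t ^ 2 - ⟪ystar, w⟫ := by linarith
    nlinarith
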